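/- arXiv:1009.5419 — 3 statements merged into one kernel-verified Lean document; each statement's English description precedes it below -/
import Mathlib

section
/- Let σ > 0, γ_T ≥ 0, and let (β_t) be a nondecreasing nonnegative sequence. Suppose (s_t) satisfies 0 ≤ s_t ≤ 1 and (1/2)∑_{t=1}^T log(1 + σ^{-2} s_t) ≤ γ_T. Then ∑_{t=1}^T √(β_t · s_t) ≤ √(T · C₁ · β_T · γ_T) with C₁ = 2/log(1 + σ^{-2}). -/
theorem stmt_2 (σ γ : ℝ) (hσ : 0 < σ) (hγ : 0 ≤ γ) (β s : ℕ → ℝ)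
    (hβmono : Monotone β) (hβ0 : ∀ t, 0 ≤ β t)
    (hs0 : ∀ t, 0 ≤ s t) (hs1 : ∀ t, s t ≤ 1) (T : ℕ)
    (hinfo : (1 / 2) * ∑ t ∈ Finset.Icc 1 T, Real.log (1 + (σ ^ 2)⁻¹ * s t) ≤ γ) :
    ∑ t ∈ Finset.Icc 1 T, Real.sqrt (β t * s t) ≤
      Real.sqrt ((T : ℝ) * (2 / Real.log (1 + (σ ^ 2)⁻¹)) * β T * γ) := by
  set c : ℝ := (σ ^ 2)⁻¹ with hc
  have hcpos : 0 < c := by positivity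
  have hL : 0 < Real.log (1 + c) := Real.log_pos (by linarith)
  -- key pointwise bound: s t * log (1+c) ≤ log (1 + c * s t)
  have key : ∀ t, s t * Real.log (1 + c) ≤ Real.log (1 + c * s t) := by
    intro t
    have h1 : (1 + c) ^ (s t) ≤ 1 + s t * c :=
      rpow_one_add_le_one_add_mul_self (by linarith) (hs0 t) (hs1 t)
    have h2 : Real.log ((1 + c) ^ (s t)) ≤ Real.log (1 + s t * c) :=
      Real.log_le_log (by positivity) h1
    rwa [Real.log_rpow (by linarith), mul_comm (s t) c] at h2
  -- sum bound: ∑ β t * s t ≤ β T * (2γ / log(1+c))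
  have hsum : ∑ t ∈ Finset.Icc 1 T, β t * s t ≤ β T * (2 * γ / Real.log (1 + c)) := by
    have h3 : ∑ t ∈ Finset.Icc 1 T, β t * s t ≤
        β T * ∑ t ∈ Finset.Icc 1 T, s t := by
      rw [Finset.mul_sum]
      apply Finset.sum_le_sum
      intro t ht
      exact mul_le_mul_of_nonneg_right (hβmono (Finset.mem_Icc.mp ht).2) (hs0 t)
    have h4 : ∑ t ∈ Finset.Icc 1 T, s t ≤ 2 * γ / Real.log (1 + c) := by
      rw [le_div_iff₀ hL, Finset.sum_mul]
      calc ∑ t ∈ Finset.Icc 1 T, s t * Real.log (1 + c)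
          ≤ ∑ t ∈ Finset.Icc 1 T, Real.log (1 + c * s t) :=
            Finset.sum_le_sum fun t _ => key t
        _ ≤ 2 * γ := by linarith
    calc ∑ t ∈ Finset.Icc 1 T, β t * s t ≤ β T * ∑ t ∈ Finset.Icc 1 T, s t := h3
      _ ≤ β T * (2 * γ / Real.log (1 + c)) :=
          mul_le_mul_of_nonneg_left h4 (hβ0 T)
  -- Cauchy–Schwarz
  have hcs : (∑ t ∈ Finset.Icc 1 T, Real.sqrt (β t * s t)) ^ 2 ≤
      (Finset.Icc 1 T).card * ∑ t ∈ Finset.Icc 1 T, β t * s t := by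
    have := sq_sum_le_card_mul_sum_sq (s := Finset.Icc 1 T)
      (f := fun t => Real.sqrt (β t * s t))
    refine this.trans (le_of_eq ?_)
    congr 1
    apply Finset.sum_congr rfl
    intro t _
    rw [Real.sq_sqrt (mul_nonneg (hβ0 t) (hs0 t))]
  have hcard : ((Finset.Icc 1 T).card : ℝ) ≤ T := by
    rw [Nat.card_Icc]; push_cast; simp
  have hnn : 0 ≤ ∑ t ∈ Finset.Icc 1 T, Real.sqrt (β t * s t) :=
    Finset.sum_nonneg fun t _ => Real.sqrt_nonneg _
  have hsum0 : 0 ≤ ∑ t ∈ Finset.Icc 1 T, β t * s t :=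
    Finset.sum_nonneg fun t _ => mul_nonneg (hβ0 t) (hs0 t)
  rw [show (T : ℝ) * (2 / Real.log (1 + c)) * β T * γ
      = (T : ℝ) * (β T * (2 * γ / Real.log (1 + c))) by ring]
  rw [← Real.sqrt_sq hnn]
  apply Real.sqrt_le_sqrt
  calc (∑ t ∈ Finset.Icc 1 T, Real.sqrt (β t * s t)) ^ 2
      ≤ (Finset.Icc 1 T).card * ∑ t ∈ Finset.Icc 1 T, β t * s t := hcs
    _ ≤ (T : ℝ) * (β T * (2 * γ / Real.log (1 + c))) := by
        apply mul_le_mul hcard hsum hsum0 (Nat.cast_nonneg T)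
end

section
/- Let y_{1:T} = f_{1:T} + ε_{1:T} where f_{1:T} is a Gaussian vector and ε_t ~ N(0, σ²) are independent. If at each step the conditional (posterior) variance of f_t given y_{1:t-1} is σ²_{t-1}(x_t), then the mutual information satisfies I(y_{1:T}; f_{1:T}) = (1/2) ∑_{t=1}^T log(1 + σ^{-2} σ²_{t-1}(x_t)). -/
open Matrix

/-- Mutual information `I(y_{1:T}; f_{1:T})` for the Gaussian observation model
`y = f + ε`, `f ~ N(0, K)`, `ε ~ N(0, σ² I)`, given in closed form by
`(1/2) log (det(K + σ² I) / det(σ² I))`. -/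
noncomputable def gaussInfoGain (T : ℕ) (σ : ℝ) (K : Matrix (Fin T) (Fin T) ℝ) : ℝ :=
  (1 / 2) * Real.log ((K + σ ^ 2 • (1 : Matrix (Fin T) (Fin T) ℝ)).det / (σ ^ 2) ^ T)

/-- The posterior (conditional) variance of `f_t` given the noisy observations
`y_{1:t-1}`, computed from the covariance matrix `K` via the Schur complement. -/
noncomputable def postVar (T : ℕ) (σ : ℝ) (K : Matrix (Fin T) (Fin T) ℝ) (t : Fin T) : ℝ :=
  K t t - (fun i : Fin t.val => K (Fin.castLE t.isLt.le i) t) ⬝ᵥ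
    ((K.submatrix (Fin.castLE t.isLt.le) (Fin.castLE t.isLt.le) +
        σ ^ 2 • (1 : Matrix (Fin t.val) (Fin t.val) ℝ))⁻¹ *ᵥ
      (fun i : Fin t.val => K (Fin.castLE t.isLt.le i) t))

lemma aux_smul_one_posDef {n : ℕ} {σ : ℝ} (hσ : 0 < σ) :
    (σ ^ 2 • (1 : Matrix (Fin n) (Fin n) ℝ)).PosDef := by
  rw [Matrix.smul_one_eq_diagonal]
  exact Matrix.posDef_diagonal_iff.mpr fun _ => by positivity

lemma aux_block_posDef {T n : ℕ} {σ : ℝ} (hσ : 0 < σ) (h : n ≤ T)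
    {K : Matrix (Fin T) (Fin T) ℝ} (hK : K.PosSemidef) :
    (K.submatrix (Fin.castLE h) (Fin.castLE h)
      + σ ^ 2 • (1 : Matrix (Fin n) (Fin n) ℝ)).PosDef :=
  Matrix.PosDef.posSemidef_add (hK.submatrix _) (aux_smul_one_posDef hσ)

lemma aux_submatrix_add {T n : ℕ} (σ : ℝ) (h : n ≤ T)
    (K : Matrix (Fin T) (Fin T) ℝ) :
    (K + σ ^ 2 • (1 : Matrix (Fin T) (Fin T) ℝ)).submatrix (Fin.castLE h) (Fin.castLE h)
      = K.submatrix (Fin.castLE h) (Fin.castLE h)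
        + σ ^ 2 • (1 : Matrix (Fin n) (Fin n) ℝ) := by
  ext i j
  simp [Matrix.one_apply, Fin.castLE_inj]

lemma aux_herm_apply {T : ℕ} {K : Matrix (Fin T) (Fin T) ℝ} (hK : K.PosSemidef)
    (i j : Fin T) : K i j = K j i := by
  have := congrFun (congrFun hK.isHermitian i) j
  simpa using this.symm

lemma aux_step (T : ℕ) (σ : ℝ) (hσ : 0 < σ) (K : Matrix (Fin T) (Fin T) ℝ)
    (hK : K.PosSemidef) (t : Fin T) :
    ((K + σ ^ 2 • (1 : Matrix (Fin T) (Fin T) ℝ)).submatrix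
        (Fin.castLE t.isLt) (Fin.castLE t.isLt)).det
      = ((K + σ ^ 2 • (1 : Matrix (Fin T) (Fin T) ℝ)).submatrix
          (Fin.castLE t.isLt.le) (Fin.castLE t.isLt.le)).det
        * (σ ^ 2 + postVar T σ K t) := by
  set M := K + σ ^ 2 • (1 : Matrix (Fin T) (Fin T) ℝ) with hMdef
  set n := t.val with hn
  set A : Matrix (Fin n) (Fin n) ℝ :=
    M.submatrix (Fin.castLE t.isLt.le) (Fin.castLE t.isLt.le) with hA
  set B : Matrix (Fin n) (Fin 1) ℝ := fun i _ => M (Fin.castLE t.isLt.le i) t with hB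
  set C : Matrix (Fin 1) (Fin n) ℝ := fun _ j => M t (Fin.castLE t.isLt.le j) with hC
  set D : Matrix (Fin 1) (Fin 1) ℝ := fun _ _ => M t t with hD
  have hApos : A.PosDef := by
    rw [hA, aux_submatrix_add]; exact aux_block_posDef hσ _ hK
  haveI : Invertible A := A.invertibleOfIsUnitDet hApos.det_pos.ne'.isUnit
  have hblocks : (M.submatrix (Fin.castLE t.isLt) (Fin.castLE t.isLt)).submatrix
      (finSumFinEquiv : Fin n ⊕ Fin 1 ≃ Fin (n + 1))
      (finSumFinEquiv : Fin n ⊕ Fin 1 ≃ Fin (n + 1)) = fromBlocks A B C D := by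
    ext i j
    cases i with
    | inl i =>
      cases j with
      | inl j =>
        simp [fromBlocks, hA] <;> congr 1 <;> apply Fin.ext <;> simp
      | inr j =>
        simp [fromBlocks, hB] <;> congr 1 <;> apply Fin.ext <;> simp [Fin.ext_iff] <;> omega
    | inr i =>
      cases j with
      | inl j =>
        simp [fromBlocks, hC] <;> congr 1 <;> apply Fin.ext <;> simp [Fin.ext_iff] <;> omega
      | inr j =>
        simp [fromBlocks, hD] <;> congr 1 <;> apply Fin.ext <;> simp [Fin.ext_iff] <;> omega
  have hdet : (M.submatrix (Fin.castLE t.isLt) (Fin.castLE t.isLt)).det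
      = (fromBlocks A B C D).det := by
    rw [← hblocks, det_submatrix_equiv_self]
  rw [hdet, det_fromBlocks₁₁]
  congr 1
  rw [Matrix.det_fin_one]
  have hinv : (⅟ A : Matrix (Fin n) (Fin n) ℝ) = A⁻¹ := invOf_eq_nonsing_inv A
  -- compute the 1×1 Schur complement entry
  have hentry : (D - C * ⅟ A * B) 0 0
      = M t t - (fun i : Fin n => M t (Fin.castLE t.isLt.le i)) ⬝ᵥ
          (A⁻¹ *ᵥ fun i : Fin n => M (Fin.castLE t.isLt.le i) t) := by
    rw [hinv, Matrix.mul_assoc, Matrix.sub_apply]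
    simp [Matrix.mul_apply, Matrix.mulVec, dotProduct, hB, hC, hD]
    rfl
  rw [hentry]
  -- rewrite M entries in terms of K
  have hMt : M t t = K t t + σ ^ 2 := by
    simp [hMdef, Matrix.one_apply_eq]
  have hcol : ∀ i : Fin n, M (Fin.castLE t.isLt.le i) t = K (Fin.castLE t.isLt.le i) t := by
    intro i
    have hne : (Fin.castLE t.isLt.le i) ≠ t := by
      intro h; have := congrArg Fin.val h; simp at this; omega
    simp [hMdef, Matrix.one_apply_ne hne]
  have hrow : ∀ i : Fin n, M t (Fin.castLE t.isLt.le i) = K (Fin.castLE t.isLt.le i) t := by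
    intro i
    have hne : t ≠ (Fin.castLE t.isLt.le i) := by
      intro h; have := congrArg Fin.val h; simp at this; omega
    rw [hMdef]
    simp [Matrix.one_apply_ne hne]
    exact aux_herm_apply hK t _
  have hAeq : A = K.submatrix (Fin.castLE t.isLt.le) (Fin.castLE t.isLt.le)
      + σ ^ 2 • (1 : Matrix (Fin n) (Fin n) ℝ) := by
    rw [hA, aux_submatrix_add]
  unfold postVar
  simp only [hMt, hAeq]
  have : (fun i : Fin n => M t (Fin.castLE t.isLt.le i))
      = fun i : Fin n => K (Fin.castLE t.isLt.le i) t := funext hrow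
  rw [this]
  have : (fun i : Fin n => M (Fin.castLE t.isLt.le i) t)
      = fun i : Fin n => K (Fin.castLE t.isLt.le i) t := funext hcol
  rw [this]
  ring

lemma aux_det_prod (T : ℕ) (σ : ℝ) (hσ : 0 < σ) (K : Matrix (Fin T) (Fin T) ℝ)
    (hK : K.PosSemidef) :
    ∀ (n : ℕ) (h : n ≤ T),
      ((K + σ ^ 2 • (1 : Matrix (Fin T) (Fin T) ℝ)).submatrix
        (Fin.castLE h) (Fin.castLE h)).det
      = ∏ i : Fin n, (σ ^ 2 + postVar T σ K (Fin.castLE h i))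
  | 0, h => by simp
  | n + 1, h => by
    have hlt : n < T := h
    have h1 : ((K + σ ^ 2 • (1 : Matrix (Fin T) (Fin T) ℝ)).submatrix
          (Fin.castLE h) (Fin.castLE h)).det
        = ((K + σ ^ 2 • (1 : Matrix (Fin T) (Fin T) ℝ)).submatrix
            (Fin.castLE (Nat.le_of_lt hlt)) (Fin.castLE (Nat.le_of_lt hlt))).det
          * (σ ^ 2 + postVar T σ K ⟨n, hlt⟩) := aux_step T σ hσ K hK ⟨n, hlt⟩
    rw [h1, aux_det_prod T σ hσ K hK n (Nat.le_of_lt hlt), Fin.prod_univ_castSucc]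
    rfl

lemma aux_factor_pos (T : ℕ) (σ : ℝ) (hσ : 0 < σ) (K : Matrix (Fin T) (Fin T) ℝ)
    (hK : K.PosSemidef) (t : Fin T) : 0 < σ ^ 2 + postVar T σ K t := by
  have h1 := aux_step T σ hσ K hK t
  have hd1 : 0 < ((K + σ ^ 2 • (1 : Matrix (Fin T) (Fin T) ℝ)).submatrix
      (Fin.castLE t.isLt) (Fin.castLE t.isLt)).det := by
    rw [aux_submatrix_add]; exact (aux_block_posDef hσ _ hK).det_pos
  have hd2 : 0 < ((K + σ ^ 2 • (1 : Matrix (Fin T) (Fin T) ℝ)).submatrix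
      (Fin.castLE t.isLt.le) (Fin.castLE t.isLt.le)).det := by
    rw [aux_submatrix_add]; exact (aux_block_posDef hσ _ hK).det_pos
  nlinarith

theorem stmt_11 (T : ℕ) (σ : ℝ) (hσ : 0 < σ)
    (K : Matrix (Fin T) (Fin T) ℝ) (hK : K.PosSemidef) (s : Fin T → ℝ)
    (hs : ∀ t : Fin T, s t = postVar T σ K t) :
    gaussInfoGain T σ K = (1 / 2) * ∑ t : Fin T, Real.log (1 + (σ ^ 2)⁻¹ * s t) := by
  have hfac : ∀ t : Fin T, 0 < σ ^ 2 + s t := fun t => by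
    rw [hs t]; exact aux_factor_pos T σ hσ K hK t
  have hdet : (K + σ ^ 2 • (1 : Matrix (Fin T) (Fin T) ℝ)).det
      = ∏ t : Fin T, (σ ^ 2 + s t) := by
    have h0 := aux_det_prod T σ hσ K hK T le_rfl
    have hid : (K + σ ^ 2 • (1 : Matrix (Fin T) (Fin T) ℝ)).submatrix
        (Fin.castLE le_rfl) (Fin.castLE le_rfl)
        = K + σ ^ 2 • (1 : Matrix (Fin T) (Fin T) ℝ) := by
      ext i j; rfl
    rw [hid] at h0
    rw [h0]
    exact Finset.prod_congr rfl fun t _ => by rw [hs]; rfl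
  rw [gaussInfoGain, hdet]
  congr 1
  have hσ2 : (σ ^ 2 : ℝ) ≠ 0 := by positivity
  have hquot : ∀ t : Fin T, (σ ^ 2 + s t) / σ ^ 2 = 1 + (σ ^ 2)⁻¹ * s t := fun t => by
    field_simp
  rw [show ((σ ^ 2 : ℝ)) ^ T = ∏ _t : Fin T, (σ ^ 2 : ℝ) by
      rw [Finset.prod_const]; simp,
    ← Finset.prod_div_distrib,
    Real.log_prod fun t _ => ne_of_gt (div_pos (hfac t) (by positivity))]
  exact Finset.sum_congr rfl fun t _ => by rw [hquot]
end

section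
/- Let A be a finite set and for each t ≥ 1 let x ↦ Z_t(x) be centered Gaussian variables with Var(Z_t(x)) = σ²_{t-1}(x). Fix δ ∈ (0,1), choose π_t > 0 with ∑_t π_t^{-1} = 1 (e.g. π_t = π²t²/6), and set β_t = 2 log(|A| π_t / δ). Then with probability at least 1 − δ, |Z_t(x)| ≤ √β_t · σ_{t-1}(x) for all x ∈ A and all t ≥ 1. -/
open ProbabilityTheory MeasureTheory NNReal

lemma gauss_neg (v : ℝ≥0) : (gaussianReal 0 v).map (fun x => -x) = gaussianReal 0 v := by
  have := gaussianReal_map_const_mul (μ := 0) (v := v) (-1)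
  simp only [neg_one_mul, mul_zero] at this
  convert this using 2
  ext; simp

lemma gauss_Iic_eq_Ici (v : ℝ≥0) (c : ℝ) :
    gaussianReal 0 v (Set.Iic (-c)) = gaussianReal 0 v (Set.Ici c) := by
  conv_lhs => rw [← gauss_neg v]
  rw [Measure.map_apply measurable_neg measurableSet_Iic]
  congr 1
  ext x; simp

lemma gauss_half (v : ℝ≥0) (hv : v ≠ 0) : gaussianReal 0 v (Set.Ici 0) = 1/2 := by
  have hsym : gaussianReal 0 v (Set.Iic 0) = gaussianReal 0 v (Set.Ici 0) := by
    simpa using gauss_Iic_eq_Ici v 0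
  have h0 : gaussianReal 0 v ({0} : Set ℝ) = 0 :=
    gaussianReal_absolutelyContinuous 0 hv (measure_singleton 0)
  have hunion : gaussianReal 0 v (Set.Iic 0 ∪ Set.Ici 0) = 1 := by
    rw [Set.Iic_union_Ici]; simp
  have hadd : gaussianReal 0 v (Set.Iic 0) + gaussianReal 0 v (Set.Ici 0) = 1 := by
    have := measure_union_add_inter (μ := gaussianReal 0 v) (t := Set.Ici (0:ℝ)) (Set.Iic (0:ℝ)) measurableSet_Ici
    rw [hunion, Set.Iic_inter_Ici, Set.Icc_self, h0, add_zero] at this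
    exact this.symm
  rw [hsym, ← two_mul] at hadd
  have : gaussianReal 0 v (Set.Ici 0) = 2⁻¹ * (2 * gaussianReal 0 v (Set.Ici 0)) := by
    rw [← mul_assoc, ENNReal.inv_mul_cancel (by norm_num) (by norm_num), one_mul]
  rw [this, hadd, one_div, mul_one]

lemma gauss_pdf_le (v : ℝ≥0) (c : ℝ) (hc : 0 ≤ c) (x : ℝ) (hx : c ≤ x) :
    gaussianPDFReal 0 v x ≤ Real.exp (-c^2/(2*v)) * gaussianPDFReal c v x := by
  simp only [gaussianPDFReal, sub_zero]
  rw [mul_left_comm, ← Real.exp_add]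
  refine mul_le_mul_of_nonneg_left ?_ (by positivity)
  apply Real.exp_le_exp.2
  rcases eq_or_ne (v:ℝ) 0 with h | h
  · simp [h]
  have hv : (0:ℝ) < v := lt_of_le_of_ne v.2 (Ne.symm h)
  rw [← add_div, div_le_div_iff₀ (by positivity) (by positivity)]
  nlinarith [mul_nonneg hc (sub_nonneg.2 hx)]

lemma gauss_shift_half (v : ℝ≥0) (hv : v ≠ 0) (c : ℝ) :
    gaussianReal c v (Set.Ici c) = 1/2 := by
  have h := gaussianReal_map_add_const (μ := 0) (v := v) c
  rw [zero_add] at h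
  rw [← h, Measure.map_apply (by fun_prop) measurableSet_Ici]
  have : (fun x => x + c) ⁻¹' Set.Ici c = Set.Ici 0 := by ext x; simp
  rw [this, gauss_half v hv]

lemma gauss_Ici_le (v : ℝ≥0) (hv : v ≠ 0) (c : ℝ) (hc : 0 ≤ c) :
    gaussianReal 0 v (Set.Ici c) ≤ ENNReal.ofReal (Real.exp (-c^2/(2*v))) * (1/2) := by
  rw [← gauss_shift_half v hv c, gaussianReal_apply 0 hv, gaussianReal_apply c hv,
    ← lintegral_const_mul _ (measurable_gaussianPDF c v)]
  refine setLIntegral_mono (((measurable_gaussianPDF c v).const_mul _)) (fun x hx => ?_)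
  simp only [gaussianPDF]
  rw [← ENNReal.ofReal_mul (by positivity)]
  exact ENNReal.ofReal_le_ofReal (gauss_pdf_le v c hc x hx)

lemma gauss_tail (v : ℝ≥0) (hv : v ≠ 0) (c : ℝ) (hc : 0 ≤ c) :
    gaussianReal 0 v {y | c < |y|} ≤ ENNReal.ofReal (Real.exp (-c^2/(2*v))) := by
  have hsub : {y : ℝ | c < |y|} ⊆ Set.Iic (-c) ∪ Set.Ici c := by
    intro y hy
    have hy' : c < |y| := hy
    rcases abs_cases y with ⟨h, _⟩ | ⟨h, _⟩
    · right; simp only [Set.mem_Ici]; linarith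
    · left; simp only [Set.mem_Iic]; linarith
  calc gaussianReal 0 v {y | c < |y|}
      ≤ gaussianReal 0 v (Set.Iic (-c)) + gaussianReal 0 v (Set.Ici c) :=
        le_trans (measure_mono hsub) (measure_union_le _ _)
    _ = 2 * gaussianReal 0 v (Set.Ici c) := by rw [gauss_Iic_eq_Ici, two_mul]
    _ ≤ 2 * (ENNReal.ofReal (Real.exp (-c^2/(2*v))) * (1/2)) :=
        mul_le_mul_right (gauss_Ici_le v hv c hc) 2
    _ = ENNReal.ofReal (Real.exp (-c^2/(2*v))) := by
        have h2 : (2:ENNReal) * (1/2) = 1 := by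
          rw [one_div]; exact ENNReal.mul_inv_cancel (by norm_num) (by norm_num)
        rw [mul_comm (ENNReal.ofReal _), ← mul_assoc, h2, one_mul]

set_option maxHeartbeats 1000000 in
theorem stmt_12 {A : Type*} [Fintype A] [Nonempty A]
    {Ω : Type*} [MeasureSpace Ω] (P : Measure Ω) [IsProbabilityMeasure P]
    (Z : ℕ → A → Ω → ℝ) (hZmeas : ∀ t x, Measurable (Z t x))
    (s : ℕ → A → ℝ) (hs : ∀ t x, 0 ≤ s t x)
    (hGauss : ∀ t x, Measure.map (Z t x) P = gaussianReal 0 ⟨(s t x) ^ 2, sq_nonneg _⟩)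
    (δ : ℝ) (hδ : δ ∈ Set.Ioo (0 : ℝ) 1)
    (π : ℕ → ℝ) (hπ : ∀ t, 1 ≤ t → 0 < π t) (hπsum : ∑' t : ℕ, (π (t + 1))⁻¹ = 1)
    (β : ℕ → ℝ) (hβ : ∀ t, β t = 2 * Real.log ((Fintype.card A : ℝ) * π t / δ)) :
    ENNReal.ofReal (1 - δ) ≤
      P {ω | ∀ (t : ℕ), 1 ≤ t → ∀ x : A, |Z t x ω| ≤ Real.sqrt (β t) * s t x} := by
  obtain ⟨hδ0, hδ1⟩ := hδ
  set c : ℕ → A → ℝ := fun t x => Real.sqrt (β t) * s t x with hc_def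
  have hcnn : ∀ t x, 0 ≤ c t x := fun t x => mul_nonneg (Real.sqrt_nonneg _) (hs t x)
  have hcard1 : (1:ℝ) ≤ (Fintype.card A : ℝ) := by
    exact_mod_cast Nat.one_le_iff_ne_zero.2 (Fintype.card_ne_zero)
  -- summability and π ≥ 1
  have hsummable : Summable (fun t => (π (t+1))⁻¹) := by
    by_contra h
    rw [tsum_eq_zero_of_not_summable h] at hπsum
    norm_num at hπsum
  have hπ1 : ∀ t, 1 ≤ t → 1 ≤ π t := by
    intro t ht
    obtain ⟨u, rfl⟩ := Nat.exists_eq_add_of_le ht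
    have hpos := hπ (1+u) (by omega)
    have hinv : (π (1+u))⁻¹ ≤ 1 := by
      have := Summable.le_tsum hsummable u (fun j _ => inv_nonneg.2 (hπ (j+1) (by omega)).le)
      simpa [add_comm, hπsum] using this
    have := mul_le_mul_of_nonneg_left hinv hpos.le
    rwa [mul_inv_cancel₀ hpos.ne', mul_one] at this
  have hβnn : ∀ t, 1 ≤ t → 0 ≤ β t := by
    intro t ht
    rw [hβ t]
    have h1 : 1 ≤ (Fintype.card A : ℝ) * π t / δ := by
      rw [le_div_iff₀ hδ0]
      nlinarith [hπ1 t ht]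
    linarith [Real.log_nonneg h1]
  -- per-event tail bound
  have htail : ∀ t, 1 ≤ t → ∀ x : A,
      P {ω | c t x < |Z t x ω|} ≤ ENNReal.ofReal (δ / ((Fintype.card A : ℝ) * π t)) := by
    intro t ht x
    have hmset : MeasurableSet {y : ℝ | c t x < |y|} :=
      measurableSet_lt measurable_const measurable_abs
    have hpre : {ω | c t x < |Z t x ω|} = (Z t x) ⁻¹' {y | c t x < |y|} := rfl
    rw [hpre, ← Measure.map_apply (hZmeas t x) hmset, hGauss t x]
    rcases eq_or_ne (s t x) 0 with hsz | hsz
    · have hv0 : (⟨(s t x) ^ 2, sq_nonneg _⟩ : ℝ≥0) = 0 := by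
        ext; simp [hsz]
      rw [show gaussianReal 0 ⟨(s t x) ^ 2, sq_nonneg _⟩ = Measure.dirac 0 by
        rw [← gaussianReal_zero_var 0]; congr 1,
        Measure.dirac_apply' _ hmset]
      have : (0:ℝ) ∉ {y : ℝ | c t x < |y|} := by
        simp [Set.mem_setOf_eq, not_lt, hcnn t x]
      rw [Set.indicator_of_notMem this]
      positivity
    · have hv : (⟨(s t x) ^ 2, sq_nonneg _⟩ : ℝ≥0) ≠ 0 := by
        intro h
        apply hsz
        have := congrArg Subtype.val h
        simpa [pow_eq_zero_iff] using this
      refine le_trans (gauss_tail _ hv _ (hcnn t x)) ?_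
      apply ENNReal.ofReal_le_ofReal
      have hcsq : (c t x)^2 = β t * (s t x)^2 := by
        rw [hc_def, mul_pow, Real.sq_sqrt (hβnn t ht)]
      have hs2 : (0:ℝ) < (s t x)^2 := by positivity
      have harg : -(c t x)^2 / (2 * (s t x ^ 2)) = -(β t)/2 := by
        rw [hcsq]
        field_simp
      change Real.exp (-(c t x)^2 / (2 * (s t x ^ 2))) ≤ _
      rw [harg]
      have hX : (0:ℝ) < (Fintype.card A : ℝ) * π t / δ := by
        have := hπ t ht; positivity
      rw [hβ t]
      rw [show -(2 * Real.log ((Fintype.card A : ℝ) * π t / δ))/2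
            = -Real.log ((Fintype.card A : ℝ) * π t / δ) by ring]
      rw [Real.exp_neg, Real.exp_log hX]
      rw [inv_div]
  -- the good set and its measurability
  set G : Set Ω := {ω | ∀ (t : ℕ), 1 ≤ t → ∀ x : A, |Z t x ω| ≤ c t x} with hG_def
  have hGeq : G = ⋂ (t : ℕ), ⋂ (x : A), {ω | 1 ≤ t → |Z t x ω| ≤ c t x} := by
    ext ω
    simp only [hG_def, Set.mem_setOf_eq, Set.mem_iInter]
    tauto
  have hGmeas : MeasurableSet G := by
    rw [hGeq]
    refine MeasurableSet.iInter (fun t => MeasurableSet.iInter (fun x => ?_))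
    by_cases ht : 1 ≤ t
    · simp only [ht, forall_true_left]
      exact measurableSet_le (hZmeas t x).abs measurable_const
    · simp only [ht, false_implies]
      exact MeasurableSet.univ
  -- union bound on the complement
  have hcompl_sub : Gᶜ ⊆ ⋃ (t : ℕ), ⋃ (x : A), {ω | 1 ≤ t ∧ c t x < |Z t x ω|} := by
    intro ω hω
    simp only [hG_def, Set.mem_compl_iff, Set.mem_setOf_eq, not_forall, not_le] at hω
    obtain ⟨t, ht, x, hx⟩ := hω
    exact Set.mem_iUnion.2 ⟨t, Set.mem_iUnion.2 ⟨x, ht, hx⟩⟩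
  have hbound : ∀ t x, P {ω | 1 ≤ t ∧ c t x < |Z t x ω|}
      ≤ if 1 ≤ t then ENNReal.ofReal (δ / ((Fintype.card A : ℝ) * π t)) else 0 := by
    intro t x
    by_cases ht : 1 ≤ t
    · have hset : {ω | 1 ≤ t ∧ c t x < |Z t x ω|} = {ω | c t x < |Z t x ω|} := by
        ext ω
        simp only [Set.mem_setOf_eq, ht, true_and]
      rw [hset, if_pos ht]
      exact htail t ht x
    · have : {ω | 1 ≤ t ∧ c t x < |Z t x ω|} = ∅ := by
        ext ω; simp [ht]
      simp [this, ht]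
  have hPcompl : P Gᶜ ≤ ENNReal.ofReal δ := by
    have h1 : P Gᶜ ≤ ∑' (t : ℕ), ∑' (x : A), P {ω | 1 ≤ t ∧ c t x < |Z t x ω|} :=
      le_trans (measure_mono hcompl_sub)
        (le_trans (measure_iUnion_le _) (ENNReal.tsum_le_tsum (fun t => measure_iUnion_le _)))
    have h2 : ∑' (t : ℕ), ∑' (x : A), P {ω | 1 ≤ t ∧ c t x < |Z t x ω|}
        ≤ ∑' (t : ℕ), (Fintype.card A : ENNReal) *
            (if 1 ≤ t then ENNReal.ofReal (δ / ((Fintype.card A : ℝ) * π t)) else 0) := by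
      refine ENNReal.tsum_le_tsum (fun t => ?_)
      rw [tsum_fintype]
      have hsum_le : ∑ x : A, P {ω | 1 ≤ t ∧ c t x < |Z t x ω|}
          ≤ ∑ _x : A, (if 1 ≤ t then ENNReal.ofReal (δ / ((Fintype.card A : ℝ) * π t)) else 0) :=
        Finset.sum_le_sum (fun x _ => hbound t x)
      have hsum_eq : ∑ _x : A, (if 1 ≤ t then ENNReal.ofReal (δ / ((Fintype.card A : ℝ) * π t)) else 0)
          = (Fintype.card A : ENNReal) *
            (if 1 ≤ t then ENNReal.ofReal (δ / ((Fintype.card A : ℝ) * π t)) else 0) := by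
        rw [Finset.sum_const, nsmul_eq_mul, Finset.card_univ]
      rw [← hsum_eq]
      exact hsum_le
    have h3 : ∑' (t : ℕ), (Fintype.card A : ENNReal) *
        (if 1 ≤ t then ENNReal.ofReal (δ / ((Fintype.card A : ℝ) * π t)) else 0)
        = ENNReal.ofReal δ := by
      rw [tsum_eq_zero_add' ENNReal.summable]
      simp only [Nat.not_succ_le_zero, Nat.le_add_left, if_true]
      norm_num
      have hterm : ∀ t : ℕ, (Fintype.card A : ENNReal) *
          ENNReal.ofReal (δ / ((Fintype.card A : ℝ) * π (t+1)))
          = ENNReal.ofReal δ * ENNReal.ofReal ((π (t+1))⁻¹) := by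
        intro t
        have hπpos := hπ (t+1) (by omega)
        rw [← ENNReal.ofReal_natCast, ← ENNReal.ofReal_mul (by positivity),
          ← ENNReal.ofReal_mul hδ0.le]
        congr 1
        have hcard0 : (Fintype.card A : ℝ) ≠ 0 := by linarith
        field_simp
      simp_rw [hterm]
      rw [ENNReal.tsum_mul_left, ← ENNReal.ofReal_tsum_of_nonneg
        (fun t => inv_nonneg.2 (hπ (t+1) (by omega)).le) hsummable, hπsum]
      simp
    exact le_trans h1 (le_trans h2 (le_of_eq h3))
  -- conclude
  have hPG : P G ≤ 1 := prob_le_one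
  calc ENNReal.ofReal (1 - δ) = 1 - ENNReal.ofReal δ := by
        rw [ENNReal.ofReal_sub _ hδ0.le, ENNReal.ofReal_one]
    _ ≤ 1 - P Gᶜ := tsub_le_tsub_left hPcompl 1
    _ = 1 - (1 - P G) := by rw [prob_compl_eq_one_sub hGmeas]
    _ = P G := ENNReal.sub_sub_cancel ENNReal.one_ne_top hPG
end
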